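/- Let p be a positive integer, κ ≥ 1 a real number, and N a norm on p×p real matrices that is orthogonally invariant, i.e. N(U A V) = N(A) for all orthogonal p×p matrices U, V. Let S be a symmetric p×p real matrix with spectral decomposition S = U · diag(λ̂₁,…,λ̂_p) · Uᵀ, where U is orthogonal and λ̂₁ ≥ λ̂₂ ≥ ⋯ ≥ λ̂_p. Let G := {Σ : Σ is a symmetric positive semidefinite p×p real matrix with λ_max(Σ) ≤ κ·λ_min(Σ)}, and assume the zero matrix is NOT a minimizer of Σ ↦ N(Σ − S) over G. If Λ* = diag(λ*₁,…,λ*_p) minimizes N(Λ − diag(λ̂₁,…,λ̂_p)) over all diagonal matrices Λ = diag(λ₁,…,λ_p) satisfying minᵢ λᵢ ≥ 0 and maxᵢ λᵢ ≤ κ·minᵢ λᵢ, then U Λ* Uᵀ is a minimizer of Σ ↦ N(Σ − S) over G. -/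

import Mathlib

open Matrix

/-- The largest eigenvalue of a (symmetric) real matrix, as the supremum of its spectrum. -/
noncomputable def lamMax {p : ℕ} (A : Matrix (Fin p) (Fin p) ℝ) : ℝ := sSup (spectrum ℝ A)

/-- The smallest eigenvalue of a (symmetric) real matrix, as the infimum of its spectrum. -/
noncomputable def lamMin {p : ℕ} (A : Matrix (Fin p) (Fin p) ℝ) : ℝ := sInf (spectrum ℝ A)

lemma myConjT {p : ℕ} (A : Matrix (Fin p) (Fin p) ℝ) : Aᴴ = Aᵀ := by
  ext i j; simp [conjTranspose_apply]

lemma mySpec {p : ℕ} {B : Matrix (Fin p) (Fin p) ℝ} (hB : B.IsHermitian) :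
    spectrum ℝ B = Set.range hB.eigenvalues := by
  have h1 : (hB.eigenvectorUnitary : Matrix (Fin p) (Fin p) ℝ) *
      star (hB.eigenvectorUnitary : Matrix (Fin p) (Fin p) ℝ) = 1 :=
    (Matrix.mem_unitaryGroup_iff).mp hB.eigenvectorUnitary.2
  have h2 : star (hB.eigenvectorUnitary : Matrix (Fin p) (Fin p) ℝ) *
      (hB.eigenvectorUnitary : Matrix (Fin p) (Fin p) ℝ) = 1 :=
    (Matrix.mem_unitaryGroup_iff').mp hB.eigenvectorUnitary.2
  have := spectrum.units_conjugate (R := ℝ)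
    (u := ⟨(hB.eigenvectorUnitary : Matrix (Fin p) (Fin p) ℝ),
      star (hB.eigenvectorUnitary : Matrix (Fin p) (Fin p) ℝ), h1, h2⟩)
    (a := diagonal (RCLike.ofReal ∘ hB.eigenvalues))
  simp only [Units.inv_mk, Units.val_mk] at this
  conv_lhs => rw [hB.spectral_theorem]
  rw [Unitary.conjStarAlgAut_apply]
  rw [this]
  have h3 : (RCLike.ofReal ∘ hB.eigenvalues : Fin p → ℝ) = hB.eigenvalues := by
    funext k; simp
  rw [h3, spectrum_diagonal]

lemma myDiagEq {p : ℕ} {B : Matrix (Fin p) (Fin p) ℝ} (hB : B.IsHermitian) (i : Fin p) :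
    B i i = ∑ k, hB.eigenvalues k *
      ((hB.eigenvectorUnitary : Matrix (Fin p) (Fin p) ℝ) i k)^2 := by
  conv_lhs => rw [hB.spectral_theorem]
  simp [Matrix.mul_apply, Matrix.mul_diagonal, Matrix.conjTranspose_apply, pow_two]
  congr 1; funext k
  simp [Matrix.diagonal_apply, ite_mul, Finset.sum_ite_eq]
  ring

lemma myRowNorm {p : ℕ} {B : Matrix (Fin p) (Fin p) ℝ} (hB : B.IsHermitian) (i : Fin p) :
    ∑ k, ((hB.eigenvectorUnitary : Matrix (Fin p) (Fin p) ℝ) i k)^2 = 1 := by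
  have h := (Matrix.mem_unitaryGroup_iff).mp hB.eigenvectorUnitary.2
  have h2 := congrFun (congrFun h i) i
  simpa [Matrix.mul_apply, Matrix.conjTranspose_apply, pow_two, Matrix.one_apply] using h2

lemma myDiag_le {p : ℕ} {B : Matrix (Fin p) (Fin p) ℝ} (hB : B.IsHermitian) (i : Fin p) :
    B i i ≤ lamMax B := by
  have hmem : ∀ k, hB.eigenvalues k ≤ lamMax B := by
    intro k
    rw [lamMax]
    apply le_csSup
    · rw [mySpec hB]; exact (Set.finite_range _).bddAbove
    · rw [mySpec hB]; exact Set.mem_range_self k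
  rw [myDiagEq hB i]
  calc ∑ k, hB.eigenvalues k * ((hB.eigenvectorUnitary : Matrix (Fin p) (Fin p) ℝ) i k)^2
      ≤ ∑ k, lamMax B * ((hB.eigenvectorUnitary : Matrix (Fin p) (Fin p) ℝ) i k)^2 :=
        Finset.sum_le_sum (fun k _ => mul_le_mul_of_nonneg_right (hmem k) (sq_nonneg _))
    _ = lamMax B := by rw [← Finset.mul_sum, myRowNorm hB i, mul_one]

lemma myLe_diag {p : ℕ} {B : Matrix (Fin p) (Fin p) ℝ} (hB : B.IsHermitian) (i : Fin p) :
    lamMin B ≤ B i i := by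
  have hmem : ∀ k, lamMin B ≤ hB.eigenvalues k := by
    intro k
    rw [lamMin]
    apply csInf_le
    · rw [mySpec hB]; exact (Set.finite_range _).bddBelow
    · rw [mySpec hB]; exact Set.mem_range_self k
  rw [myDiagEq hB i]
  calc lamMin B = ∑ k, lamMin B * ((hB.eigenvectorUnitary : Matrix (Fin p) (Fin p) ℝ) i k)^2 := by
        rw [← Finset.mul_sum, myRowNorm hB i, mul_one]
    _ ≤ _ := Finset.sum_le_sum (fun k _ => mul_le_mul_of_nonneg_right (hmem k) (sq_nonneg _))

def mySgn {p : ℕ} (a : Fin p) : Matrix (Fin p) (Fin p) ℝ :=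
  diagonal (fun k => if k = a then (-1 : ℝ) else 1)

lemma mySgn_orth {p : ℕ} (a : Fin p) : (mySgn a)ᵀ * mySgn a = 1 := by
  rw [mySgn, diagonal_transpose, diagonal_mul_diagonal]
  have : (fun k : Fin p => (if k = a then (-1:ℝ) else 1) * (if k = a then (-1:ℝ) else 1))
      = fun _ => (1:ℝ) := by funext k; split <;> norm_num
  rw [this, diagonal_one]

def myPinch {p : ℕ} (s : Finset (Fin p)) (A : Matrix (Fin p) (Fin p) ℝ) :
    Matrix (Fin p) (Fin p) ℝ :=
  Matrix.of fun i j => if i = j ∨ (i ∉ s ∧ j ∉ s) then A i j else 0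

lemma myPinch_empty {p : ℕ} (A : Matrix (Fin p) (Fin p) ℝ) : myPinch ∅ A = A := by
  ext i j; simp [myPinch]

lemma myPinch_univ {p : ℕ} (A : Matrix (Fin p) (Fin p) ℝ) :
    myPinch Finset.univ A = diagonal (fun i => A i i) := by
  ext i j
  by_cases h : i = j
  · subst h; simp [myPinch]
  · simp [myPinch, h, diagonal_apply_ne _ h]

lemma myPinch_insert {p : ℕ} {a : Fin p} {s : Finset (Fin p)} (ha : a ∉ s)
    (A : Matrix (Fin p) (Fin p) ℝ) :
    myPinch (insert a s) A
      = (2⁻¹ : ℝ) • (myPinch s A + mySgn a * myPinch s A * mySgn a) := by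
  ext i j
  have hentry : (mySgn a * myPinch s A * mySgn a) i j
      = (if i = a then (-1:ℝ) else 1) * (myPinch s A i j) * (if j = a then (-1:ℝ) else 1) := by
    simp [mySgn, Matrix.diagonal_mul, Matrix.mul_diagonal]
  simp only [Matrix.smul_apply, Matrix.add_apply, hentry, smul_eq_mul]
  by_cases hij : i = j
  · subst hij
    simp only [myPinch, Matrix.of_apply, if_pos (Or.inl rfl)]
    by_cases hia : i = a <;> simp [hia] <;> ring
  · by_cases hC : i ∉ s ∧ j ∉ s
    · by_cases hia : i = a
      · have hja : j ≠ a := fun h => hij (hia.trans h.symm)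
        simp only [myPinch, Matrix.of_apply, hij, hC, hia, hja, Finset.mem_insert, ha,
          not_false_iff, and_self, or_true, if_true, false_or, if_false,
          not_true, false_and, and_false, if_neg (fun h : a = j => hja h.symm)]
        simp [hja.symm, hij]
        try ring
      · by_cases hja : j = a
        · simp [myPinch, hij, hC, hia, hja, Finset.mem_insert, ha]
          try ring
        · simp [myPinch, hij, hC, hia, hja, Finset.mem_insert, ha]
          try ring
    · have hC' : ¬ (i ∉ insert a s ∧ j ∉ insert a s) := by
        intro ⟨h1, h2⟩
        exact hC ⟨fun h => h1 (Finset.mem_insert_of_mem h),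
          fun h => h2 (Finset.mem_insert_of_mem h)⟩
      simp only [myPinch, Matrix.of_apply, hij, false_or, if_neg hC, if_neg hC']
      ring

lemma myN_pinch {p : ℕ} (N : Matrix (Fin p) (Fin p) ℝ → ℝ)
    (hNsmul : ∀ (c : ℝ) (A : Matrix (Fin p) (Fin p) ℝ), N (c • A) = |c| * N A)
    (hNadd : ∀ A B, N (A + B) ≤ N A + N B)
    (hNinv : ∀ (U V A : Matrix (Fin p) (Fin p) ℝ),
      Uᵀ * U = 1 → Vᵀ * V = 1 → N (U * A * V) = N A)
    (s : Finset (Fin p)) (A : Matrix (Fin p) (Fin p) ℝ) :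
    N (myPinch s A) ≤ N A := by
  induction s using Finset.induction_on with
  | empty => rw [myPinch_empty]
  | @insert a s ha ih =>
    rw [myPinch_insert ha, hNsmul]
    have h1 : N (mySgn a * myPinch s A * mySgn a) = N (myPinch s A) :=
      hNinv _ _ _ (mySgn_orth a) (mySgn_orth a)
    have h2 := hNadd (myPinch s A) (mySgn a * myPinch s A * mySgn a)
    rw [h1] at h2
    have habs : |(2⁻¹:ℝ)| = 2⁻¹ := by norm_num
    rw [habs]
    linarith

theorem stmt0 {p : ℕ} (hp : 0 < p) (κ : ℝ) (hκ : 1 ≤ κ)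
    (N : Matrix (Fin p) (Fin p) ℝ → ℝ)
    -- N is a norm:
    (hN0 : ∀ A, N A = 0 ↔ A = 0)
    (hNsmul : ∀ (c : ℝ) (A : Matrix (Fin p) (Fin p) ℝ), N (c • A) = |c| * N A)
    (hNadd : ∀ A B, N (A + B) ≤ N A + N B)
    -- N is orthogonally invariant:
    (hNinv : ∀ (U V A : Matrix (Fin p) (Fin p) ℝ),
      Uᵀ * U = 1 → Vᵀ * V = 1 → N (U * A * V) = N A)
    (S U : Matrix (Fin p) (Fin p) ℝ) (lamhat : Fin p → ℝ)
    (hSsym : S.IsHermitian)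
    (hU : Uᵀ * U = 1)
    (hS : S = U * Matrix.diagonal lamhat * Uᵀ)
    (hanti : ∀ i j : Fin p, i ≤ j → lamhat j ≤ lamhat i)
    (G : Set (Matrix (Fin p) (Fin p) ℝ))
    (hG : G = {M : Matrix (Fin p) (Fin p) ℝ | M.PosSemidef ∧ lamMax M ≤ κ * lamMin M})
    -- the zero matrix is not a minimizer of `Σ ↦ N (Σ - S)` over `G`:
    (hzero : ¬ ∀ M ∈ G, N ((0 : Matrix (Fin p) (Fin p) ℝ) - S) ≤ N (M - S))
    (lamstar : Fin p → ℝ)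
    -- Λ* is feasible:
    (hfeas₁ : ∀ i, 0 ≤ lamstar i)
    (hfeas₂ : ∀ i j, lamstar i ≤ κ * lamstar j)
    -- Λ* minimizes over feasible diagonal matrices:
    (hmin : ∀ lam : Fin p → ℝ, (∀ i, 0 ≤ lam i) → (∀ i j, lam i ≤ κ * lam j) →
      N (Matrix.diagonal lamstar - Matrix.diagonal lamhat) ≤
        N (Matrix.diagonal lam - Matrix.diagonal lamhat)) :
    U * Matrix.diagonal lamstar * Uᵀ ∈ G ∧
      ∀ M ∈ G, N (U * Matrix.diagonal lamstar * Uᵀ - S) ≤ N (M - S) := by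
  have hnp : Nonempty (Fin p) := ⟨⟨0, hp⟩⟩
  have hκ0 : (0:ℝ) ≤ κ := le_trans zero_le_one hκ
  have hUU : U * Uᵀ = 1 := mul_eq_one_comm.mp hU
  have hUtU : (Uᵀ)ᵀ * Uᵀ = 1 := by rwa [transpose_transpose]
  constructor
  · rw [hG]
    refine ⟨?_, ?_⟩
    · have hd : (Matrix.diagonal lamstar).PosSemidef :=
        Matrix.PosSemidef.diagonal (fun i => hfeas₁ i)
      have := hd.mul_mul_conjTranspose_same U
      rwa [myConjT] at this
    · have hs1 : spectrum ℝ (U * Matrix.diagonal lamstar * Uᵀ) = Set.range lamstar := by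
        have := spectrum.units_conjugate (R := ℝ)
          (u := ⟨U, Uᵀ, hUU, hU⟩) (a := Matrix.diagonal lamstar)
        simp only [Units.inv_mk, Units.val_mk] at this
        rw [this, spectrum_diagonal]
      rw [lamMax, lamMin, hs1]
      have hne : (Set.range lamstar).Nonempty := Set.range_nonempty _
      obtain ⟨i0, hi0⟩ := Set.mem_range.mp (hne.csSup_mem (Set.finite_range _))
      obtain ⟨j0, hj0⟩ := Set.mem_range.mp (hne.csInf_mem (Set.finite_range _))
      rw [← hi0, ← hj0]
      exact hfeas₂ i0 j0
  · intro M hM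
    rw [hG] at hM
    obtain ⟨hMpsd, hMeig⟩ := hM
    set B := Uᵀ * M * U with hBdef
    have hBpsd : B.PosSemidef := by
      have := hMpsd.mul_mul_conjTranspose_same Uᵀ
      rwa [myConjT, transpose_transpose] at this
    have hB : B.IsHermitian := hBpsd.1
    have hspecB : spectrum ℝ B = spectrum ℝ M := by
      have := spectrum.units_conjugate' (R := ℝ) (u := ⟨U, Uᵀ, hUU, hU⟩) (a := M)
      simp only [Units.inv_mk, Units.val_mk] at this
      exact this
    have hmaxB : lamMax B = lamMax M := by rw [lamMax, lamMax, hspecB]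
    have hminB : lamMin B = lamMin M := by rw [lamMin, lamMin, hspecB]
    -- nonnegativity of lamMin M
    have hMmin0 : 0 ≤ lamMin M := by
      rw [lamMin, mySpec hMpsd.1]
      have hne : (Set.range hMpsd.1.eigenvalues).Nonempty := Set.range_nonempty _
      obtain ⟨k, hk⟩ := Set.mem_range.mp (hne.csInf_mem (Set.finite_range _))
      rw [← hk]
      exact hMpsd.eigenvalues_nonneg k
    set lam : Fin p → ℝ := fun i => B i i with hlamdef
    have hlam0 : ∀ i, 0 ≤ lam i := fun i =>
      le_trans hMmin0 (by rw [← hminB]; exact myLe_diag hB i)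
    have hlamfeas : ∀ i j, lam i ≤ κ * lam j := by
      intro i j
      calc lam i ≤ lamMax B := myDiag_le hB i
        _ = lamMax M := hmaxB
        _ ≤ κ * lamMin M := hMeig
        _ = κ * lamMin B := by rw [hminB]
        _ ≤ κ * lam j := mul_le_mul_of_nonneg_left (myLe_diag hB j) hκ0
    have key1 : N (U * Matrix.diagonal lamstar * Uᵀ - S)
        = N (Matrix.diagonal lamstar - Matrix.diagonal lamhat) := by
      have heq : U * Matrix.diagonal lamstar * Uᵀ - S
          = U * (Matrix.diagonal lamstar - Matrix.diagonal lamhat) * Uᵀ := by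
        rw [hS, Matrix.mul_sub, Matrix.sub_mul]
      rw [heq]
      exact hNinv U Uᵀ _ hU hUtU
    have hSd : Uᵀ * S * U = Matrix.diagonal lamhat := by
      rw [hS]
      rw [show Uᵀ * (U * Matrix.diagonal lamhat * Uᵀ) * U
        = (Uᵀ * U) * Matrix.diagonal lamhat * (Uᵀ * U) by noncomm_ring, hU]
      simp
    have key2 : B - Matrix.diagonal lamhat = Uᵀ * (M - S) * U := by
      rw [Matrix.mul_sub, Matrix.sub_mul, hSd]
    have key3 : N (Uᵀ * (M - S) * U) = N (M - S) := hNinv Uᵀ U _ hUtU hU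
    have key4 : Matrix.diagonal lam - Matrix.diagonal lamhat
        = myPinch Finset.univ (B - Matrix.diagonal lamhat) := by
      rw [myPinch_univ]
      have : (fun i => (B - Matrix.diagonal lamhat) i i) = fun i => lam i - lamhat i := by
        funext i
        simp [Matrix.sub_apply, Matrix.diagonal_apply_eq, hlamdef]
      rw [this, ← Matrix.diagonal_sub]
    calc N (U * Matrix.diagonal lamstar * Uᵀ - S)
        = N (Matrix.diagonal lamstar - Matrix.diagonal lamhat) := key1
      _ ≤ N (Matrix.diagonal lam - Matrix.diagonal lamhat) := hmin lam hlam0 hlamfeas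
      _ = N (myPinch Finset.univ (B - Matrix.diagonal lamhat)) := by rw [key4]
      _ ≤ N (B - Matrix.diagonal lamhat) := myN_pinch N hNsmul hNadd hNinv _ _
      _ = N (Uᵀ * (M - S) * U) := by rw [key2]
      _ = N (M - S) := key3
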